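/- Let (f₁,…,f_N; p₁,…,p_N) be an admissible iterated function system on [0,1] with Markov operator P and constants ε ∈ (0,1/2), α, δ ∈ (0,1), M = ε^{-α} such that P preserves P⁻_{M,α} and ℙ(∩_{j=1}^{⌊n^{1/4}⌋} A_{x,j}(ε)) ≤ γ_n for x ∈ [ε_n, ε], where ε_n = (1−δ)^{⌊n^{1/4}⌋/2} and γ_n = (1−δ)^{α⌊n^{1/4}⌋/2}. Then for all n and all k ≥ ⌊n^{1/4}⌋ and x ∈ [ε_n, 1]: ℙ({ i ∈ Σ : f_i^k(x) < ε_n }) ≤ 2M γ_n. -/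

import Mathlib

open Set MeasureTheory Finset Filter

/-- An admissible iterated function system on `[0,1]`: increasing homeomorphisms of
`[0,1]` fixing the endpoints, `C¹` near the endpoints with positive derivatives
`d i` at `0` and `e i` at `1`, positive probabilities, positive Lyapunov exponents at
both endpoints, and at every interior point some map moves it left and some right. -/
structure AdmissibleIFS (N : ℕ) (f : Fin N → ℝ → ℝ) (p d e : Fin N → ℝ) : Prop where
  meas : ∀ i, Measurable (f i)
  mono : ∀ i, StrictMonoOn (f i) (Icc 0 1)
  maps : ∀ i, MapsTo (f i) (Icc 0 1) (Icc 0 1)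
  cont : ∀ i, ContinuousOn (f i) (Icc 0 1)
  surj : ∀ i, SurjOn (f i) (Icc 0 1) (Icc 0 1)
  fix0 : ∀ i, f i 0 = 0
  fix1 : ∀ i, f i 1 = 1
  ppos : ∀ i, 0 < p i
  psum : ∑ i, p i = 1
  c1 : ∀ i, ∃ η > (0:ℝ), ContDiffOn ℝ 1 (f i) (Icc 0 η) ∧ ContDiffOn ℝ 1 (f i) (Icc (1 - η) 1)
  deriv0 : ∀ i, HasDerivWithinAt (f i) (d i) (Icc 0 1) 0
  deriv1 : ∀ i, HasDerivWithinAt (f i) (e i) (Icc 0 1) 1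
  dpos : ∀ i, 0 < d i
  epos : ∀ i, 0 < e i
  lyap0 : 0 < ∑ i, p i * Real.log (d i)
  lyap1 : 0 < ∑ i, p i * Real.log (e i)
  interior : ∀ x ∈ Ioo (0:ℝ) 1, (∃ i, f i x < x) ∧ (∃ j, x < f j x)

/-- Iterates along a sequence of indices: `wordIter f ω n = f_{ω (n-1)} ∘ ⋯ ∘ f_{ω 0}`. -/
def wordIter {N : ℕ} (f : Fin N → ℝ → ℝ) (ω : ℕ → Fin N) : ℕ → ℝ → ℝ
  | 0 => id
  | n + 1 => f (ω n) ∘ wordIter f ω n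

/-- `⌊n^{1/4}⌋`. -/
noncomputable def nroot4 (n : ℕ) : ℕ := ⌊(n : ℝ) ^ ((1 : ℝ) / 4)⌋₊

namespace Stmt12Aux

variable {N : ℕ} (f : Fin N → ℝ → ℝ)

/-- iterate along a finite word, last letter applied last. -/
def iterW : ∀ {m : ℕ}, (Fin m → Fin N) → ℝ → ℝ
  | 0, _, x => x
  | _ + 1, w, x => f (w (Fin.last _)) (iterW (fun i => w i.castSucc) x)

lemma wordIter_eq_iterW (ω : ℕ → Fin N) : ∀ (j : ℕ) (x : ℝ),
    wordIter f ω j x = iterW f (fun i : Fin j => ω i) x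
  | 0, _ => rfl
  | j+1, x => by
    show f (ω j) (wordIter f ω j x) = _
    rw [wordIter_eq_iterW ω j x]
    show _ = f (ω (Fin.last j)) (iterW f (fun i : Fin j => ω (i.castSucc : Fin (j+1))) x)
    simp [Fin.val_last, Fin.coe_castSucc]

lemma wordIter_congr {ω ω' : ℕ → Fin N} : ∀ (j : ℕ), (∀ t, t < j → ω t = ω' t) →
    ∀ x, wordIter f ω j x = wordIter f ω' j x
  | 0, _, _ => rfl
  | j+1, h, x => by
    show f (ω j) (wordIter f ω j x) = f (ω' j) (wordIter f ω' j x)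
    rw [wordIter_congr j (fun t ht => h t (ht.trans j.lt_succ_self)) x, h j j.lt_succ_self]

lemma wordIter_add (ω : ℕ → Fin N) (j : ℕ) (x : ℝ) : ∀ r : ℕ,
    wordIter f ω (j + r) x = wordIter f (fun t => ω (j + t)) r (wordIter f ω j x)
  | 0 => rfl
  | r+1 => by
    show f (ω (j + r)) (wordIter f ω (j + r) x) = f (ω (j + r)) _
    rw [wordIter_add ω j x r]

lemma wordIter_mem (hmaps : ∀ i, MapsTo (f i) (Icc 0 1) (Icc 0 1)) (ω : ℕ → Fin N)
    {x : ℝ} (hx : x ∈ Icc (0:ℝ) 1) : ∀ j, wordIter f ω j x ∈ Icc (0:ℝ) 1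
  | 0 => hx
  | j+1 => hmaps (ω j) (wordIter_mem hmaps ω hx j)

/-- extend a finite word to an infinite one. -/
def ext (i0 : Fin N) {m : ℕ} (w : Fin m → Fin N) : ℕ → Fin N :=
  fun t => if h : t < m then w ⟨t, h⟩ else i0

lemma ext_lt (i0 : Fin N) {m : ℕ} (w : Fin m → Fin N) {t : ℕ} (h : t < m) :
    ext i0 w t = w ⟨t, h⟩ := dif_pos h

lemma iterW_eq_wordIter (i0 : Fin N) {m : ℕ} (w : Fin m → Fin N) (x : ℝ) :
    iterW f w x = wordIter f (ext i0 w) m x := by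
  rw [wordIter_eq_iterW]
  congr 1
  funext i
  rw [ext_lt i0 w i.isLt]

lemma iterW_succ {m : ℕ} (w : Fin (m+1) → Fin N) (x : ℝ) :
    iterW f w x = f (w (Fin.last m)) (iterW f (fun i => w i.castSucc) x) := rfl

lemma iterW_snoc {m : ℕ} (w : Fin m → Fin N) (i : Fin N) (x : ℝ) :
    iterW f (Fin.snoc w i) x = f i (iterW f w x) := by
  have h : (fun t : Fin m => (Fin.snoc w i : Fin (m+1) → Fin N) t.castSucc) = w :=
    funext fun t => by simp
  rw [iterW_succ, Fin.snoc_last, h]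

lemma iterW_mem (hmaps : ∀ i, MapsTo (f i) (Icc 0 1) (Icc 0 1)) {m : ℕ} (w : Fin m → Fin N)
    {x : ℝ} (hx : x ∈ Icc (0:ℝ) 1) : iterW f w x ∈ Icc (0:ℝ) 1 := by
  cases m with
  | zero => exact hx
  | succ m =>
    rw [iterW_eq_wordIter f (w 0) w x]
    exact wordIter_mem f hmaps _ hx _

lemma iterW_add (i0 : Fin N) (j r : ℕ) (w : Fin (j + r) → Fin N) (x : ℝ) :
    iterW f w x = iterW f (fun i : Fin r => w (Fin.natAdd j i))
      (iterW f (fun i : Fin j => w (Fin.castAdd r i)) x) := by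
  rw [iterW_eq_wordIter f i0 w x, wordIter_add f (ext i0 w) j x r]
  rw [iterW_eq_wordIter f i0 (fun i : Fin j => w (Fin.castAdd r i)) x]
  have h1 : wordIter f (ext i0 w) j x
      = wordIter f (ext i0 fun i : Fin j => w (Fin.castAdd r i)) j x := by
    refine wordIter_congr f j (fun t ht => ?_) x
    rw [ext_lt i0 w (by omega : t < j + r), ext_lt i0 _ ht]
    congr 1
  rw [← h1, iterW_eq_wordIter f i0 (fun i : Fin r => w (Fin.natAdd j i)) _]
  refine wordIter_congr f r (fun t ht => ?_) _
  rw [ext_lt i0 w (by omega : j + t < j + r), ext_lt i0 _ ht]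
  congr 1

open scoped Classical

variable (p : Fin N → ℝ)

/-- product weight of a finite word. -/
noncomputable def Pw {m : ℕ} (w : Fin m → Fin N) : ENNReal := ∏ i, ENNReal.ofReal (p (w i))

/-- the one-step marginal. -/
noncomputable def mu0 : Measure (Fin N) := ∑ j, ENNReal.ofReal (p j) • Measure.dirac j

def snocEquiv (m : ℕ) : ((Fin m → Fin N) × Fin N) ≃ (Fin (m+1) → Fin N) where
  toFun uv := Fin.snoc uv.1 uv.2
  invFun w := (Fin.init w, w (Fin.last m))
  left_inv := by rintro ⟨u, i⟩; simp [Fin.init_snoc]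
  right_inv w := Fin.snoc_init_self w

lemma sum_snoc {M : Type*} [AddCommMonoid M] (m : ℕ) (g : (Fin (m+1) → Fin N) → M) :
    ∑ w, g w = ∑ u : Fin m → Fin N, ∑ i, g (Fin.snoc u i) := by
  rw [← Equiv.sum_comp (snocEquiv m) g, Fintype.sum_prod_type]
  rfl

lemma Pw_snoc {m : ℕ} (u : Fin m → Fin N) (i : Fin N) :
    Pw p (Fin.snoc u i) = Pw p u * ENNReal.ofReal (p i) := by
  simp [Pw, Fin.prod_univ_castSucc]

lemma sum_Pw (hp : ∑ i, p i = 1) (hpos : ∀ i, 0 ≤ p i) :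
    ∀ m : ℕ, ∑ w : Fin m → Fin N, Pw p w = 1
  | 0 => by
    have : ∀ w : Fin 0 → Fin N, Pw p w = 1 := fun w => by simp [Pw]
    simp only [this]
    simp [Finset.card_univ]
  | m+1 => by
    rw [sum_snoc]
    simp only [Pw_snoc]
    have h1 : ∑ i, ENNReal.ofReal (p i) = 1 := by
      rw [← ENNReal.ofReal_sum_of_nonneg (fun i _ => hpos i), hp, ENNReal.ofReal_one]
    calc ∑ u : Fin m → Fin N, ∑ i : Fin N, Pw p u * ENNReal.ofReal (p i)
        = ∑ u : Fin m → Fin N, Pw p u * ∑ i, ENNReal.ofReal (p i) := by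
          simp [Finset.mul_sum]
      _ = 1 := by rw [h1]; simp [sum_Pw hp hpos m]

lemma sum_ennreal_p (hp : ∑ i, p i = 1) (hpos : ∀ i, 0 ≤ p i) :
    ∑ i, ENNReal.ofReal (p i) = 1 := by
  rw [← ENNReal.ofReal_sum_of_nonneg (fun i _ => hpos i), hp, ENNReal.ofReal_one]

lemma mu0_apply (S : Set (Fin N)) : mu0 p S = ∑ j, ENNReal.ofReal (p j) * S.indicator 1 j := by
  rw [mu0, Measure.coe_finset_sum]
  simp [Measure.dirac_apply]

instance mu0_finite : IsFiniteMeasure (mu0 p) := by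
  constructor
  rw [mu0_apply]
  simp only [Set.indicator_univ, Pi.one_apply, mul_one]
  exact ENNReal.sum_lt_top.mpr fun j _ => ENNReal.ofReal_lt_top

lemma mu0_singleton (j : Fin N) : mu0 p {j} = ENNReal.ofReal (p j) := by
  rw [mu0_apply]
  rw [Finset.sum_eq_single j]
  · simp
  · intro b _ hb; simp [Set.indicator, hb]
  · intro h; exact absurd (Finset.mem_univ j) h

lemma pi_singleton (m : ℕ) (w : Fin m → Fin N) :
    Measure.pi (fun _ : Fin m => mu0 p) {w} = Pw p w := by
  rw [← Set.univ_pi_singleton w, Measure.pi_pi]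
  simp [mu0_singleton, Pw]

lemma pi_apply (m : ℕ) (S : Set (Fin m → Fin N)) :
    Measure.pi (fun _ : Fin m => mu0 p) S = ∑ w : Fin m → Fin N, if w ∈ S then Pw p w else 0 := by
  have hS : S = ⋃ w ∈ (Set.toFinite S).toFinset, {w} := by
    ext u; simp only [Set.mem_iUnion, Set.mem_singleton_iff, Set.Finite.mem_toFinset]
    constructor
    · intro h; exact ⟨u, h, rfl⟩
    · rintro ⟨w, hw, rfl⟩; exact hw
  nth_rewrite 1 [hS]
  rw [measure_biUnion_finset]
  · simp only [pi_singleton]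
    rw [← Finset.sum_filter]
    congr 1
    ext w
    simp only [Set.Finite.mem_toFinset, Finset.mem_filter, Finset.mem_univ, true_and]
  · intro a _ b _ hab
    simp [Function.onFun, Set.disjoint_singleton, hab]
  · intro w _; exact Set.Finite.measurableSet (Set.toFinite _)

lemma master (ℙ : Measure (ℕ → Fin N))
    (hcyl : ∀ m : ℕ, ℙ.map (fun ω (k : Fin m) => ω k)
      = Measure.pi (fun _ : Fin m => ∑ j, ENNReal.ofReal (p j) • Measure.dirac j))
    (m : ℕ) (Q : (Fin m → Fin N) → Prop) :
    ℙ {ω | Q (fun i : Fin m => ω i)} = ∑ w : Fin m → Fin N, if Q w then Pw p w else 0 := by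
  have hproj : Measurable (fun (ω : ℕ → Fin N) (i : Fin m) => (ω i : Fin N)) :=
    measurable_pi_lambda _ (fun i => measurable_pi_apply _)
  have hE : MeasurableSet {w : Fin m → Fin N | Q w} := Set.Finite.measurableSet (Set.toFinite _)
  have hset : {ω : ℕ → Fin N | Q (fun i : Fin m => ω i)}
      = (fun ω (i : Fin m) => (ω i : Fin N)) ⁻¹' {w | Q w} := rfl
  rw [hset, ← Measure.map_apply hproj hE, hcyl m]
  have : (∑ j, ENNReal.ofReal (p j) • Measure.dirac j : Measure (Fin N)) = mu0 p := rfl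
  rw [this, pi_apply]
  rfl

def splitEquiv (j r : ℕ) : ((Fin j → Fin N) × (Fin r → Fin N)) ≃ (Fin (j+r) → Fin N) :=
  (Equiv.sumArrowEquivProdArrow _ _ _).symm.trans
    (Equiv.arrowCongr finSumFinEquiv (Equiv.refl _))

lemma splitEquiv_castAdd (j r : ℕ) (u : Fin j → Fin N) (v : Fin r → Fin N) (i : Fin j) :
    splitEquiv j r (u, v) (Fin.castAdd r i) = u i := by
  simp [splitEquiv, Equiv.sumArrowEquivProdArrow, Equiv.arrowCongr,
    finSumFinEquiv_symm_apply_castAdd]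

lemma splitEquiv_natAdd (j r : ℕ) (u : Fin j → Fin N) (v : Fin r → Fin N) (i : Fin r) :
    splitEquiv j r (u, v) (Fin.natAdd j i) = v i := by
  simp [splitEquiv, Equiv.sumArrowEquivProdArrow, Equiv.arrowCongr,
    finSumFinEquiv_symm_apply_natAdd]

lemma Pw_split (j r : ℕ) (u : Fin j → Fin N) (v : Fin r → Fin N) :
    Pw p (splitEquiv j r (u, v)) = Pw p u * Pw p v := by
  rw [Pw, Fin.prod_univ_add]
  simp only [splitEquiv_castAdd, splitEquiv_natAdd]
  rfl

lemma iterW_split (i0 : Fin N) (j r : ℕ) (u : Fin j → Fin N) (v : Fin r → Fin N) (x : ℝ) :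
    iterW f (splitEquiv j r (u, v)) x = iterW f v (iterW f u x) := by
  rw [iterW_add f i0 j r]
  congr 1
  · funext i; exact splitEquiv_natAdd j r u v i
  · congr 1; funext i; exact splitEquiv_castAdd j r u v i

/-- Markov property / splitting at time `j`. -/
lemma MP (i0 : Fin N) (ℙ : Measure (ℕ → Fin N))
    (hcyl : ∀ m : ℕ, ℙ.map (fun ω (k : Fin m) => ω k)
      = Measure.pi (fun _ : Fin m => ∑ j, ENNReal.ofReal (p j) • Measure.dirac j))
    (x : ℝ) (j r : ℕ) (Q : (ℕ → Fin N) → Prop)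
    (hQ : ∀ ω ω', (∀ t, t < j → ω t = ω' t) → Q ω → Q ω') (T : ℝ → Prop) :
    ℙ {ω | Q ω ∧ T (wordIter f ω (j+r) x)} =
      ∑ u : Fin j → Fin N, (if Q (ext i0 u) then Pw p u else 0) *
        ∑ v : Fin r → Fin N, (if T (iterW f v (iterW f u x)) then Pw p v else 0) := by
  have hset : {ω : ℕ → Fin N | Q ω ∧ T (wordIter f ω (j+r) x)}
      = {ω : ℕ → Fin N | (fun w : Fin (j+r) → Fin N => Q (ext i0 w) ∧ T (iterW f w x))
          (fun i : Fin (j+r) => ω i)} := by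
    ext ω
    simp only [Set.mem_setOf_eq]
    constructor
    · rintro ⟨hq, ht⟩
      refine ⟨hQ ω _ (fun t ht' => ?_) hq, ?_⟩
      · rw [ext_lt i0 _ (by omega : t < j + r)]
      · rw [← wordIter_eq_iterW]; exact ht
    · rintro ⟨hq, ht⟩
      refine ⟨hQ _ ω (fun t ht' => ?_) hq, ?_⟩
      · rw [ext_lt i0 _ (by omega : t < j + r)]
      · rw [wordIter_eq_iterW]; exact ht
  rw [hset, master p ℙ hcyl (j+r) (fun w => Q (ext i0 w) ∧ T (iterW f w x))]
  rw [← Equiv.sum_comp (splitEquiv j r), Fintype.sum_prod_type]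
  refine Finset.sum_congr rfl fun u _ => ?_
  rw [Finset.mul_sum]
  refine Finset.sum_congr rfl fun v _ => ?_
  have hagree : ∀ t, t < j → ext i0 (splitEquiv j r (u, v)) t = ext i0 u t := by
    intro t ht
    rw [ext_lt i0 _ (by omega : t < j + r), ext_lt i0 _ ht]
    have hc : (⟨t, by omega⟩ : Fin (j+r)) = Fin.castAdd r ⟨t, ht⟩ := Fin.ext rfl
    rw [hc, splitEquiv_castAdd]
  have h1 : Q (ext i0 (splitEquiv j r (u, v))) ↔ Q (ext i0 u) :=
    ⟨hQ _ _ hagree, hQ _ _ (fun t ht => (hagree t ht).symm)⟩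
  have h2 : iterW f (splitEquiv j r (u, v)) x = iterW f v (iterW f u x) :=
    iterW_split f i0 j r u v x
  rw [h2, Pw_split]
  by_cases hq : Q (ext i0 u) <;> by_cases htv : T (iterW f v (iterW f u x)) <;>
    simp [hq, htv, h1]
lemma map_finsetSum {α β ι : Type*} [MeasurableSpace α] [MeasurableSpace β]
    (s : Finset ι) (μ : ι → Measure α) {g : α → β} (hg : Measurable g) :
    (∑ i ∈ s, μ i).map g = ∑ i ∈ s, (μ i).map g := by
  classical
  induction s using Finset.induction with
  | empty => simp [Measure.map_zero]
  | @insert a s hns ih =>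
    rw [Finset.sum_insert hns, Finset.sum_insert hns, Measure.map_add _ _ hg, ih]

/-- The key measure-class iteration bound. -/
lemma C1 (hmeas : ∀ i, Measurable (f i)) (hmaps : ∀ i, MapsTo (f i) (Icc 0 1) (Icc 0 1))
    (hp : ∑ i, p i = 1) (hpos : ∀ i, 0 ≤ p i)
    (ε α M : ℝ) (hε0 : 0 < ε) (hα0 : 0 < α) (hM : M = ε ^ (-α))
    (hclass : ∀ μ : Measure ℝ, IsProbabilityMeasure μ → μ (Icc (0:ℝ) 1)ᶜ = 0 →
      (∀ x ∈ Icc (0:ℝ) 1, μ (Icc 0 x) ≤ ENNReal.ofReal (M * x ^ α)) →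
      ∀ x ∈ Icc (0:ℝ) 1,
        (∑ i, ENNReal.ofReal (p i) • Measure.map (f i) μ) (Icc 0 x)
          ≤ ENNReal.ofReal (M * x ^ α))
    {z t : ℝ} (hz : ε ≤ z) (hz1 : z ≤ 1) (ht0 : 0 ≤ t) (ht1 : t ≤ 1) (r : ℕ) :
    ∑ v : Fin r → Fin N, (if iterW f v z ≤ t then Pw p v else 0)
      ≤ ENNReal.ofReal (M * t ^ α) := by
  have hz0 : (0:ℝ) ≤ z := le_trans (le_of_lt hε0) hz
  set μr : ℕ → Measure ℝ :=
    fun r => (∑ v : Fin r → Fin N, Pw p v • Measure.dirac (iterW f v z)) with hμr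
  have happly : ∀ (r : ℕ) (S : Set ℝ),
      μr r S = ∑ v : Fin r → Fin N, Pw p v * Measure.dirac (iterW f v z) S := by
    intro r S
    rw [hμr]
    rw [show ((∑ v : Fin r → Fin N, Pw p v • Measure.dirac (iterW f v z)) S)
      = (⇑(∑ v : Fin r → Fin N, Pw p v • Measure.dirac (iterW f v z))) S from rfl]
    rw [Measure.coe_finset_sum, Finset.sum_apply]
    simp [Measure.smul_apply, smul_eq_mul]
  have hmem : ∀ (r : ℕ) (v : Fin r → Fin N), iterW f v z ∈ Icc (0:ℝ) 1 :=
    fun r v => iterW_mem f hmaps v ⟨hz0, hz1⟩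
  have hprob : ∀ r, IsProbabilityMeasure (μr r) := by
    intro r
    constructor
    rw [happly]
    simp [sum_Pw p hp hpos r]
  have hcompl : ∀ r, μr r (Icc (0:ℝ) 1)ᶜ = 0 := by
    intro r
    rw [happly]
    refine Finset.sum_eq_zero fun v _ => ?_
    rw [Measure.dirac_apply]
    rw [Set.indicator_of_notMem (by simpa using hmem r v)]
    simp
  have hstep : ∀ r, μr (r+1) = ∑ i, ENNReal.ofReal (p i) • (μr r).map (f i) := by
    intro r
    have hmap : ∀ i : Fin N, (μr r).map (f i)
        = ∑ v : Fin r → Fin N, Pw p v • Measure.dirac (f i (iterW f v z)) := by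
      intro i
      rw [hμr, map_finsetSum _ _ (hmeas i)]
      refine Finset.sum_congr rfl fun v _ => ?_
      rw [Measure.map_smul, Measure.map_dirac' (hmeas i)]
    calc μr (r+1) = ∑ u : Fin r → Fin N, ∑ i : Fin N,
          Pw p (Fin.snoc u i) • Measure.dirac (iterW f (Fin.snoc u i) z) := by
            rw [hμr]; exact sum_snoc r _
      _ = ∑ u : Fin r → Fin N, ∑ i : Fin N,
          (ENNReal.ofReal (p i) * Pw p u) • Measure.dirac (f i (iterW f u z)) := by
            refine Finset.sum_congr rfl fun u _ => Finset.sum_congr rfl fun i _ => ?_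
            rw [Pw_snoc, iterW_snoc, mul_comm]
      _ = ∑ i : Fin N, ENNReal.ofReal (p i) • (μr r).map (f i) := by
            rw [Finset.sum_comm]
            refine Finset.sum_congr rfl fun i _ => ?_
            rw [hmap i, Finset.smul_sum]
            refine Finset.sum_congr rfl fun u _ => ?_
            rw [smul_smul]
  have main : ∀ r, ∀ s : ℝ, 0 ≤ s → s ≤ 1 → μr r (Icc 0 s) ≤ ENNReal.ofReal (M * s ^ α) := by
    intro r
    induction r with
    | zero =>
      intro s hs0 hs1
      rw [happly]
      have hiter : ∀ v : Fin 0 → Fin N, iterW f v z = z := fun _ => rfl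
      simp only [hiter]
      rw [← Finset.sum_mul, sum_Pw p hp hpos 0, one_mul]
      rw [Measure.dirac_apply]
      by_cases hzs : z ≤ s
      · rw [Set.indicator_of_mem (by exact ⟨hz0, hzs⟩ : z ∈ Icc (0:ℝ) s)]
        have h1 : ε ^ (-α) * ε ^ α = 1 := by
          rw [← Real.rpow_add hε0]; simp
        have h2 : ε ^ α ≤ s ^ α :=
          Real.rpow_le_rpow (le_of_lt hε0) (le_trans hz hzs) (le_of_lt hα0)
        have h3 : (1:ℝ) ≤ M * s ^ α := by
          rw [hM]
          nlinarith [Real.rpow_pos_of_pos hε0 (-α)]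
        simpa using ENNReal.one_le_ofReal.mpr h3
      · rw [Set.indicator_of_notMem (by simp [hzs] : z ∉ Icc (0:ℝ) s)]
        simp
    | succ r ih =>
      intro s hs0 hs1
      rw [hstep r]
      exact hclass (μr r) (hprob r) (hcompl r) (fun u hu => ih u hu.1 hu.2) s ⟨hs0, hs1⟩
  calc ∑ v : Fin r → Fin N, (if iterW f v z ≤ t then Pw p v else 0)
      ≤ ∑ v : Fin r → Fin N, Pw p v * Measure.dirac (iterW f v z) (Icc 0 t) := by
        refine Finset.sum_le_sum fun v _ => ?_
        by_cases h : iterW f v z ≤ t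
        · have hm : iterW f v z ∈ Icc (0:ℝ) t := ⟨(hmem r v).1, h⟩
          rw [if_pos h, Measure.dirac_apply, Set.indicator_of_mem hm]
          simp
        · rw [if_neg h]; positivity
    _ = μr r (Icc 0 t) := (happly r _).symm
    _ ≤ ENNReal.ofReal (M * t ^ α) := main r t ht0 ht1

end Stmt12Aux

open Stmt12Aux

/-- (Lemma `mass_boundary`.) With `ε_n = (1-δ)^{⌊n^{1/4}⌋/2}` and
`γ_n = (1-δ)^{α⌊n^{1/4}⌋/2}`: for all `n`, all `k ≥ ⌊n^{1/4}⌋` and all `x ∈ [ε_n, 1]`,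
`ℙ(f_i^k(x) < ε_n) ≤ 2 M γ_n`. -/
theorem stmt12 (N : ℕ) (f : Fin N → ℝ → ℝ) (p d e : Fin N → ℝ)
    (hadm : AdmissibleIFS N f p d e)
    (ε α δ M : ℝ)
    (hε : ε ∈ Ioo (0:ℝ) (1/2)) (hα : α ∈ Ioo (0:ℝ) 1) (hδ : δ ∈ Ioo (0:ℝ) 1)
    (hM : M = ε ^ (-α))
    -- the Markov operator preserves the class `P⁻_{M,α}`
    (hclass : ∀ μ : Measure ℝ, IsProbabilityMeasure μ → μ (Icc (0:ℝ) 1)ᶜ = 0 →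
      (∀ x ∈ Icc (0:ℝ) 1, μ (Icc 0 x) ≤ ENNReal.ofReal (M * x ^ α)) →
      ∀ x ∈ Icc (0:ℝ) 1,
        (∑ i, ENNReal.ofReal (p i) • Measure.map (f i) μ) (Icc 0 x)
          ≤ ENNReal.ofReal (M * x ^ α))
    -- `ℙ` is the product measure on `Σ = {1,…,N}^ℕ` with marginals `p`
    (ℙ : Measure (ℕ → Fin N)) (hPprob : IsProbabilityMeasure ℙ)
    (hcyl : ∀ m : ℕ, ℙ.map (fun ω (k : Fin m) => ω k)
      = Measure.pi (fun _ : Fin m => ∑ j, ENNReal.ofReal (p j) • Measure.dirac j))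
    -- the probability bound on `⋂_{j=1}^{⌊n^{1/4}⌋} A_{x,j}(ε)`
    (hA : ∀ n : ℕ, ∀ x ∈ Icc ((1 - δ) ^ ((nroot4 n : ℝ) / 2)) ε,
      ℙ {ω | ∀ j : ℕ, 1 ≤ j → j ≤ nroot4 n → wordIter f ω j x < ε}
        ≤ ENNReal.ofReal ((1 - δ) ^ (α * (nroot4 n : ℝ) / 2))) :
    ∀ n k : ℕ, nroot4 n ≤ k →
      ∀ x ∈ Icc ((1 - δ) ^ ((nroot4 n : ℝ) / 2)) 1,
        ℙ {ω | wordIter f ω k x < (1 - δ) ^ ((nroot4 n : ℝ) / 2)}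
          ≤ ENNReal.ofReal (2 * M * (1 - δ) ^ (α * (nroot4 n : ℝ) / 2)) := by
  classical
  intro n k hk x hx
  rcases Nat.eq_zero_or_pos N with hN | hN
  · exact absurd hadm.psum (by subst hN; simp)
  have i0 : Fin N := ⟨0, hN⟩
  have hppos : ∀ i, 0 ≤ p i := fun i => (hadm.ppos i).le
  set m := nroot4 n with hm
  set εn : ℝ := (1 - δ) ^ ((m : ℝ) / 2) with hεn
  set γ : ℝ := (1 - δ) ^ (α * (m : ℝ) / 2) with hγ
  have h1δ0 : (0:ℝ) < 1 - δ := by linarith [hδ.2]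
  have h1δ1 : (1:ℝ) - δ ≤ 1 := by linarith [hδ.1]
  have hεn0 : 0 < εn := Real.rpow_pos_of_pos h1δ0 _
  have hεn1 : εn ≤ 1 := Real.rpow_le_one h1δ0.le h1δ1 (by positivity)
  have hγ0 : 0 ≤ γ := (Real.rpow_pos_of_pos h1δ0 _).le
  have hγ1 : γ ≤ 1 := Real.rpow_le_one h1δ0.le h1δ1
    (div_nonneg (mul_nonneg hα.1.le (Nat.cast_nonneg m)) (by norm_num))
  have hεnα : εn ^ α = γ := by
    rw [hεn, hγ, ← Real.rpow_mul h1δ0.le]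
    congr 1; ring
  have hMpos : 0 < M := hM ▸ Real.rpow_pos_of_pos hε.1 _
  have hM1 : 1 ≤ M := by
    rw [hM]
    have h := Real.rpow_le_rpow_of_exponent_ge hε.1 (by linarith [hε.2] : ε ≤ 1)
      (by linarith [hα.1] : -α ≤ (0:ℝ))
    simpa using h
  have hεx : (0:ℝ) ≤ x := le_trans hεn0.le hx.1
  have hx1 : x ≤ 1 := hx.2
  have hC1 : ∀ z : ℝ, ε ≤ z → z ≤ 1 → ∀ r : ℕ,
      (∑ v : Fin r → Fin N, if iterW f v z < εn then Pw p v else 0)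
        ≤ ENNReal.ofReal (M * γ) := by
    intro z hz hz1 r
    calc (∑ v : Fin r → Fin N, if iterW f v z < εn then Pw p v else 0)
        ≤ ∑ v : Fin r → Fin N, if iterW f v z ≤ εn then Pw p v else 0 := by
          refine Finset.sum_le_sum fun v _ => ?_
          by_cases h : iterW f v z < εn
          · rw [if_pos h, if_pos h.le]
          · rw [if_neg h]; positivity
      _ ≤ ENNReal.ofReal (M * εn ^ α) :=
          C1 f p hadm.meas hadm.maps hadm.psum hppos ε α M hε.1 hα.1 hM hclass
            hz hz1 hεn0.le hεn1 r
      _ = ENNReal.ofReal (M * γ) := by rw [hεnα]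
  have hMono : ENNReal.ofReal (M * γ) ≤ ENNReal.ofReal (2 * M * γ) :=
    ENNReal.ofReal_le_ofReal (by nlinarith)
  by_cases hxε : ε ≤ x
  · -- the orbit starts above ε : direct class bound
    have hset : {ω : ℕ → Fin N | wordIter f ω k x < εn}
        = {ω : ℕ → Fin N | (fun w : Fin k → Fin N => iterW f w x < εn)
            (fun i : Fin k => ω i)} := by
      ext ω; simp only [Set.mem_setOf_eq, wordIter_eq_iterW]
    rw [hset, master p ℙ hcyl k (fun w : Fin k → Fin N => iterW f w x < εn)]
    exact le_trans (hC1 x hxε hx1 k) hMono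
  · -- x ∈ [εn, ε)
    have hxε' : x ≤ ε := (not_le.mp hxε).le
    -- the escape sets
    set Esc : ℕ → Set (ℕ → Fin N) := fun j =>
      {ω | (∀ j', 1 ≤ j' → j' < j → wordIter f ω j' x < ε) ∧ ε ≤ wordIter f ω j x}
      with hEsc
    have hcongrEsc : ∀ (jj : ℕ) (ω ω' : ℕ → Fin N), (∀ t, t < jj → ω t = ω' t) →
        ω ∈ Esc jj → ω' ∈ Esc jj := by
      rintro jj ω ω' hag ⟨h1, h2⟩
      constructor
      · intro j' hj'1 hj'j
        rw [← wordIter_congr f j' (fun t ht => hag t (lt_trans ht hj'j)) x]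
        exact h1 j' hj'1 hj'j
      · rw [← wordIter_congr f jj hag x]
        exact h2
    set Stay : Set (ℕ → Fin N) :=
      {ω | ∀ j : ℕ, 1 ≤ j → j ≤ m → wordIter f ω j x < ε} with hStay
    set Bad : Set (ℕ → Fin N) := {ω | wordIter f ω k x < εn} with hBad
    have hcover : Bad ⊆ Stay ∪ ⋃ j ∈ Finset.Icc 1 m, (Esc j ∩ Bad) := by
      intro ω hω
      by_cases hst : ω ∈ Stay
      · exact Or.inl hst
      · right
        rw [hStay, Set.mem_setOf_eq] at hst
        push_neg at hst
        obtain ⟨j, hj1, hjm, hjε⟩ := hst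
        have hex : ∃ j, (1 ≤ j ∧ j ≤ m) ∧ ε ≤ wordIter f ω j x := ⟨j, ⟨hj1, hjm⟩, hjε⟩
        set j0 := Nat.find hex with hj0
        obtain ⟨⟨hj01, hj0m⟩, hj0ε⟩ := Nat.find_spec hex
        refine Set.mem_iUnion₂.mpr ⟨j0, Finset.mem_Icc.mpr ⟨hj01, hj0m⟩, ?_, hω⟩
        refine ⟨fun j' hj'1 hj'j0 => ?_, hj0ε⟩
        by_contra hcon
        exact Nat.find_min hex hj'j0 ⟨⟨hj'1, le_trans hj'j0.le hj0m⟩, not_lt.mp hcon⟩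
    have hsplit : ℙ Bad ≤ ℙ Stay + ∑ j ∈ Finset.Icc 1 m, ℙ (Esc j ∩ Bad) :=
      le_trans (measure_mono hcover)
        (le_trans (measure_union_le _ _)
          (add_le_add_right (measure_biUnion_finset_le _ _) _))
    have hStayle : ℙ Stay ≤ ENNReal.ofReal γ := hA n x ⟨hx.1, hxε'⟩
    -- the per-escape-time bound
    have hterm : ∀ j ∈ Finset.Icc 1 m,
        ℙ (Esc j ∩ Bad) ≤ ℙ (Esc j) * ENNReal.ofReal (M * γ) := by
      intro j hj
      obtain ⟨hj1, hjm⟩ := Finset.mem_Icc.mp hj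
      obtain ⟨r, hr⟩ : ∃ r, j + r = k := ⟨k - j, by omega⟩
      have hEB : Esc j ∩ Bad = {ω | ω ∈ Esc j ∧ wordIter f ω (j + r) x < εn} := by
        rw [hr]; rfl
      rw [hEB, MP f p i0 ℙ hcyl x j r (fun ω => ω ∈ Esc j) (hcongrEsc j)
        (fun z => z < εn)]
      have hmaster : ℙ (Esc j) = ∑ u : Fin j → Fin N,
          (if ext i0 u ∈ Esc j then Pw p u else 0) := by
        have hset2 : Esc j = {ω : ℕ → Fin N |
            (fun u : Fin j → Fin N => ext i0 u ∈ Esc j) (fun i : Fin j => ω i)} := by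
          ext ω
          simp only [Set.mem_setOf_eq]
          constructor
          · intro h
            exact hcongrEsc j ω _
              (fun t ht => (ext_lt i0 (fun i : Fin j => ω i) ht).symm) h
          · intro h
            exact hcongrEsc j _ ω (fun t ht => ext_lt i0 (fun i : Fin j => ω i) ht) h
        conv_lhs => rw [hset2]
        rw [master p ℙ hcyl j (fun u : Fin j → Fin N => ext i0 u ∈ Esc j)]
        exact Finset.sum_congr rfl fun w _ => by
          by_cases h : ext i0 w ∈ Esc j <;> simp [h]
      rw [hmaster, Finset.sum_mul]
      refine Finset.sum_le_sum fun u _ => ?_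
      by_cases hq : ext i0 u ∈ Esc j
      · rw [if_pos hq, if_pos hq]
        refine mul_le_mul_right ?_ _
        have hz : ε ≤ iterW f u x := by
          rw [iterW_eq_wordIter f i0 u x]
          exact hq.2
        have hz1 : iterW f u x ≤ 1 := (iterW_mem f hadm.maps u ⟨hεx, hx1⟩).2
        exact hC1 (iterW f u x) hz hz1 r
      · rw [if_neg hq, if_neg hq, zero_mul]
        positivity
    -- total escape mass at most one
    have hescsum : ∑ j ∈ Finset.Icc 1 m, ℙ (Esc j) ≤ 1 := by
      have hmasterm : ∀ j, 1 ≤ j → j ≤ m → ℙ (Esc j) = ∑ w : Fin m → Fin N,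
          (if ext i0 w ∈ Esc j then Pw p w else 0) := by
        intro j hj1 hjm
        have hset2 : Esc j = {ω : ℕ → Fin N |
            (fun w : Fin m → Fin N => ext i0 w ∈ Esc j) (fun i : Fin m => ω i)} := by
          ext ω
          simp only [Set.mem_setOf_eq]
          constructor
          · intro h
            exact hcongrEsc j ω _
              (fun t ht => (ext_lt i0 (fun i : Fin m => ω i) (lt_of_lt_of_le ht hjm)).symm) h
          · intro h
            exact hcongrEsc j _ ω
              (fun t ht => ext_lt i0 (fun i : Fin m => ω i) (lt_of_lt_of_le ht hjm)) h
        conv_lhs => rw [hset2]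
        rw [master p ℙ hcyl m (fun u : Fin m → Fin N => ext i0 u ∈ Esc j)]
        exact Finset.sum_congr rfl fun w _ => by
          by_cases h : ext i0 w ∈ Esc j <;> simp [h]
      calc ∑ j ∈ Finset.Icc 1 m, ℙ (Esc j)
          = ∑ j ∈ Finset.Icc 1 m, ∑ w : Fin m → Fin N,
              (if ext i0 w ∈ Esc j then Pw p w else 0) := by
            refine Finset.sum_congr rfl fun j hj => ?_
            obtain ⟨hj1, hjm⟩ := Finset.mem_Icc.mp hj
            exact hmasterm j hj1 hjm
        _ = ∑ w : Fin m → Fin N, ∑ j ∈ Finset.Icc 1 m,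
              (if ext i0 w ∈ Esc j then Pw p w else 0) := Finset.sum_comm
        _ ≤ ∑ w : Fin m → Fin N, Pw p w := by
            refine Finset.sum_le_sum fun w _ => ?_
            by_cases hex : ∃ j ∈ Finset.Icc 1 m, ext i0 w ∈ Esc j
            · obtain ⟨j0, hj0mem, hj0e⟩ := hex
              have huniq : ∀ j ∈ Finset.Icc 1 m,
                  (if ext i0 w ∈ Esc j then Pw p w else 0)
                    = (if j = j0 then Pw p w else 0) := by
                intro j hjmem
                by_cases hjj : j = j0
                · rw [if_pos hjj, if_pos (hjj ▸ hj0e)]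
                · rw [if_neg hjj, if_neg ?_]
                  intro hje
                  rcases lt_or_gt_of_ne hjj with hlt | hgt
                  · exact absurd hje.2 (not_le.mpr
                      (hj0e.1 j (Finset.mem_Icc.mp hjmem).1 hlt))
                  · exact absurd hj0e.2 (not_le.mpr
                      (hje.1 j0 (Finset.mem_Icc.mp hj0mem).1 hgt))
              rw [Finset.sum_congr rfl huniq, Finset.sum_ite_eq' (Finset.Icc 1 m) j0]
              rw [if_pos hj0mem]
            · push_neg at hex
              rw [Finset.sum_congr rfl (fun j hj => if_neg (hex j hj))]
              simp
        _ = 1 := sum_Pw p hadm.psum hppos m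
    -- assemble
    calc ℙ Bad ≤ ℙ Stay + ∑ j ∈ Finset.Icc 1 m, ℙ (Esc j ∩ Bad) := hsplit
      _ ≤ ENNReal.ofReal γ + ∑ j ∈ Finset.Icc 1 m, ℙ (Esc j) * ENNReal.ofReal (M * γ) :=
          add_le_add hStayle (Finset.sum_le_sum hterm)
      _ = ENNReal.ofReal γ + (∑ j ∈ Finset.Icc 1 m, ℙ (Esc j)) * ENNReal.ofReal (M * γ) := by
          rw [Finset.sum_mul]
      _ ≤ ENNReal.ofReal γ + 1 * ENNReal.ofReal (M * γ) :=
          add_le_add_right (mul_le_mul_left hescsum _) _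
      _ = ENNReal.ofReal (γ + M * γ) := by
          rw [one_mul, ENNReal.ofReal_add hγ0 (by nlinarith)]
      _ ≤ ENNReal.ofReal (2 * M * γ) := ENNReal.ofReal_le_ofReal (by nlinarith)
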